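/- If G is a finite group satisfying o(xy) ≤ max{o(x), o(y)} for all x, y ∈ G, then G is solvable. -/

import Mathlib

theorem stmt_17_aux : ∀ (n : ℕ) (G : Type u) [Group G] [Finite G], Nat.card G ≤ n →
    (∀ x y : G, orderOf (x * y) ≤ max (orderOf x) (orderOf y)) → IsSolvable G := by
  intro n
  induction n with
  | zero =>
    intro G _ _ hcard _
    have := Nat.card_pos (α := G)
    omega
  | succ n ih =>
    intro G _ _ hcard h
    obtain ⟨g, hg⟩ := Finite.exists_max (fun x : G => orderOf x)
    by_cases hg1 : orderOf g = 1
    · have : Subsingleton G := ⟨fun a b => by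
        have ha : orderOf a = 1 := le_antisymm (hg1 ▸ hg a) (orderOf_pos a)
        have hb : orderOf b = 1 := le_antisymm (hg1 ▸ hg b) (orderOf_pos b)
        rw [orderOf_eq_one_iff] at ha hb
        rw [ha, hb]⟩
      exact (inferInstance : Group.IsSolvable G)
    · have hg2 : 2 ≤ orderOf g := by
        have := orderOf_pos g
        omega
      set N : Subgroup G :=
        { carrier := {x | orderOf x < orderOf g}
          one_mem' := by simp only [Set.mem_setOf_eq, orderOf_one]; omega
          mul_mem' := fun {a b} ha hb => lt_of_le_of_lt (h a b) (max_lt ha hb)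
          inv_mem' := fun {a} ha => by
            simpa only [Set.mem_setOf_eq, orderOf_inv] using ha } with hNdef
      have hmemN : ∀ x : G, x ∈ N ↔ orderOf x < orderOf g := fun x => Iff.rfl
      have hNnormal : N.Normal := ⟨fun a ha c => by
        rw [hmemN] at ha ⊢
        rwa [show c * a * c⁻¹ = (MulAut.conj c) a from rfl, (MulAut.conj c).orderOf_eq]⟩
      -- N is a proper subgroup since g ∉ N
      have hgN : g ∉ N := by rw [hmemN]; omega
      have hcardN : Nat.card N < Nat.card G := by
        have hss : (N : Set G) ⊂ Set.univ :=
          Set.ssubset_univ_iff.mpr (fun hEq => hgN (by rw [← SetLike.mem_coe, hEq]; exact Set.mem_univ g))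
        have := Set.Finite.card_lt_card (Set.finite_univ) hss
        simpa [Nat.card_univ] using this
      have hNsolv : IsSolvable N := by
        refine ih N (by omega) (fun x y => ?_)
        have := h (x : G) (y : G)
        simpa only [← Subgroup.orderOf_coe, Subgroup.coe_mul] using this
      -- the quotient is a p-group for p the least prime factor of orderOf g
      set p := (orderOf g).minFac with hp
      have hpprime : Fact p.Prime := ⟨Nat.minFac_prime hg1⟩
      have hpQ : IsPGroup p (G ⧸ N) := by
        intro q
        obtain ⟨x, rfl⟩ := QuotientGroup.mk_surjective q
        refine ⟨1, ?_⟩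
        rw [pow_one, ← QuotientGroup.mk_pow, QuotientGroup.eq_one_iff]
        rw [hmemN]
        rcases lt_or_eq_of_le (hg x) with hlt | heq
        · calc orderOf (x ^ p) ≤ orderOf x := by
                rw [orderOf_pow]; exact Nat.div_le_self _ _
            _ < orderOf g := hlt
        · rw [orderOf_pow, heq, Nat.gcd_eq_right (Nat.minFac_dvd _)]
          exact Nat.div_lt_self (by omega) hpprime.out.one_lt
      have hQsolv : IsSolvable (G ⧸ N) := by
        have := hpQ.isNilpotent
        exact (inferInstance : Group.IsSolvable (G ⧸ N))
      haveI : Group.IsSolvable N := hNsolv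
      haveI : Group.IsSolvable (G ⧸ N) := hQsolv
      exact solvable_of_ker_le_range N.subtype (QuotientGroup.mk' N)
        (by rw [QuotientGroup.ker_mk', Subgroup.range_subtype])

theorem stmt_17 {G : Type*} [Group G] [Finite G]
    (h : ∀ x y : G, orderOf (x * y) ≤ max (orderOf x) (orderOf y)) :
    IsSolvable G := by
  exact stmt_17_aux (Nat.card G) G le_rfl h
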